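/- Let f: R^d → R have L-Lipschitz gradient and be bounded below by f_*. Consider iterates x_{t+1} = x_t - η sign(m_{t+1}) with m_{t+1} = β m_t + (1-β) g_t, where ||m_{t+1} - τ∇f(x_t)|| ≤ ε_t for all t. Then (1/T) Σ_{t=0}^{T-1} ||∇f(x_t)||_1 ≤ (f(x_0)-f_*)/(ηT) + (2√d/(τT)) Σ_{t=0}^{T-1} ε_t + η d L / 2. -/

import Mathlib

open Finset Real

-- descent lemma
lemma descent {d : ℕ} {L : ℝ} (hL : 0 ≤ L) (f : EuclideanSpace ℝ (Fin d) → ℝ)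
    (hf : Differentiable ℝ f)
    (hlip : ∀ a b, ‖gradient f a - gradient f b‖ ≤ L * ‖a - b‖) (a b : EuclideanSpace ℝ (Fin d)) :
    f b ≤ f a + inner ℝ (gradient f a) (b - a) + L / 2 * ‖b - a‖ ^ 2 := by
  set v := b - a with hv
  set φ : ℝ → ℝ := fun t => f (a + t • v) - t * inner ℝ (gradient f a) v - L / 2 * ‖v‖ ^ 2 * t ^ 2
    with hφ
  have hline : ∀ t : ℝ, HasDerivAt (fun s : ℝ => a + s • v) v t := by
    intro t
    simpa using ((hasDerivAt_id t).smul_const v).const_add a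
  have hder : ∀ t : ℝ, HasDerivAt φ
      ((inner ℝ (gradient f (a + t • v)) v : ℝ) - inner ℝ (gradient f a) v - L * ‖v‖ ^ 2 * t) t := by
    intro t
    have h1 : HasDerivAt (fun s : ℝ => f (a + s • v)) (inner ℝ (gradient f (a + t • v)) v : ℝ) t := by
      have := ((hf (a + t • v)).hasGradientAt.hasFDerivAt).comp_hasDerivAt t (hline t)
      simpa [Function.comp_def, gradient] using this
    have h2 : HasDerivAt (fun s : ℝ => s * (inner ℝ (gradient f a) v : ℝ))
        (inner ℝ (gradient f a) v : ℝ) t := by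
      simpa using (hasDerivAt_id t).mul_const (inner ℝ (gradient f a) v : ℝ)
    have h3 : HasDerivAt (fun s : ℝ => L / 2 * ‖v‖ ^ 2 * s ^ 2) (L / 2 * ‖v‖ ^ 2 * (2 * t)) t := by
      simpa using (hasDerivAt_pow 2 t).const_mul (L / 2 * ‖v‖ ^ 2)
    have := (h1.sub h2).sub h3
    rw [show (inner ℝ (gradient f (a + t • v)) v : ℝ) - inner ℝ (gradient f a) v - L * ‖v‖ ^ 2 * t
        = inner ℝ (gradient f (a + t • v)) v - inner ℝ (gradient f a) v - L / 2 * ‖v‖ ^ 2 * (2 * t) by ring]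
    exact this
  have hmono : AntitoneOn φ (Set.Icc (0:ℝ) 1) := by
    apply antitoneOn_of_deriv_nonpos (convex_Icc 0 1)
    · have : Differentiable ℝ φ := fun t => (hder t).differentiableAt
      exact this.continuous.continuousOn
    · intro t _
      exact (hder t).differentiableAt.differentiableWithinAt
    · intro t ht
      rw [interior_Icc] at ht
      rw [(hder t).deriv]
      have hcs : (inner ℝ (gradient f (a + t • v)) v : ℝ) - inner ℝ (gradient f a) v
          ≤ L * ‖v‖ ^ 2 * t := by
        have h1 : (inner ℝ (gradient f (a + t • v)) v : ℝ) - inner ℝ (gradient f a) v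
            = inner ℝ (gradient f (a + t • v) - gradient f a) v := by
          rw [inner_sub_left]
        rw [h1]
        calc (inner ℝ (gradient f (a + t • v) - gradient f a) v : ℝ)
            ≤ ‖gradient f (a + t • v) - gradient f a‖ * ‖v‖ := real_inner_le_norm _ _
          _ ≤ (L * ‖a + t • v - a‖) * ‖v‖ := by
              apply mul_le_mul_of_nonneg_right (hlip _ _) (norm_nonneg _)
          _ = L * ‖v‖ ^ 2 * t := by
              have : a + t • v - a = t • v := by abel
              rw [this, norm_smul]
              simp [Real.norm_eq_abs, abs_of_pos ht.1]
              ring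
      linarith
  have h01 := hmono (Set.mem_Icc.2 ⟨le_refl 0, zero_le_one⟩) (Set.mem_Icc.2 ⟨zero_le_one, le_refl 1⟩) zero_le_one
  simp only [hφ, zero_smul, add_zero, one_smul] at h01
  have : a + v = b := by rw [hv]; abel
  rw [this] at h01
  nlinarith [h01]

-- sign key lemma
lemma sign_key (τ a c : ℝ) (hτ : 0 < τ) :
    τ * (|a| - a * Real.sign c) ≤ 2 * |τ * a - c| := by
  rcases lt_trichotomy c 0 with h | h | h
  · rw [Real.sign_of_neg h]
    rcases abs_cases a with ⟨h1, h2⟩ | ⟨h1, h2⟩ <;>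
      rcases abs_cases (τ * a - c) with ⟨h3, h4⟩ | ⟨h3, h4⟩ <;> nlinarith
  · rw [h, Real.sign_zero]
    rcases abs_cases a with ⟨h1, h2⟩ | ⟨h1, h2⟩ <;>
      rcases abs_cases (τ * a - 0) with ⟨h3, h4⟩ | ⟨h3, h4⟩ <;> nlinarith
  · rw [Real.sign_of_pos h]
    rcases abs_cases a with ⟨h1, h2⟩ | ⟨h1, h2⟩ <;>
      rcases abs_cases (τ * a - c) with ⟨h3, h4⟩ | ⟨h3, h4⟩ <;> nlinarith

-- l1 vs l2
lemma l1_le_sqrt_d {d : ℕ} (u : EuclideanSpace ℝ (Fin d)) :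
    ∑ j, |u j| ≤ Real.sqrt d * ‖u‖ := by
  have := Real.sum_mul_le_sqrt_mul_sqrt Finset.univ (fun _ => (1:ℝ)) (fun j => |u j|)
  simp only [one_mul, one_pow, Finset.sum_const, Finset.card_univ, Fintype.card_fin,
    nsmul_eq_mul, mul_one, sq_abs] at this
  calc ∑ j, |u j| ≤ Real.sqrt d * Real.sqrt (∑ j, u j ^ 2) := this
    _ = Real.sqrt d * ‖u‖ := by
        have he : ∑ j, u j ^ 2 = ∑ j, ‖u j‖ ^ 2 :=
          Finset.sum_congr rfl fun j _ => by rw [Real.norm_eq_abs, sq_abs]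
        rw [EuclideanSpace.norm_eq, he]

/-- Let `f : ℝ^d → ℝ` have `L`-Lipschitz gradient and be bounded below by
`f⋆`. Consider iterates `x (t+1) = x t - η • sign (m (t+1))` with
`m (t+1) = β • m t + (1-β) • g t`, where `‖m (t+1) - τ • ∇f (x t)‖ ≤ ε t` for all `t`.
Then `(1/T) ∑_{t<T} ‖∇f (x t)‖₁ ≤ (f (x 0) - f⋆)/(ηT) + (2√d/(τT)) ∑_{t<T} ε t + η d L / 2`. -/
theorem stmt_12 (d T : ℕ) (hT : 1 ≤ T) (L η β τ fstar : ℝ)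
    (hL : 0 ≤ L) (hη : 0 < η) (hτ : 0 < τ) (hβ0 : 0 ≤ β) (hβ1 : β < 1)
    (f : EuclideanSpace ℝ (Fin d) → ℝ) (hf : Differentiable ℝ f)
    (hlip : ∀ a b, ‖gradient f a - gradient f b‖ ≤ L * ‖a - b‖)
    (hlb : ∀ z, fstar ≤ f z)
    (x m g : ℕ → EuclideanSpace ℝ (Fin d)) (ε : ℕ → ℝ)
    (hrec : ∀ t, m (t+1) = β • m t + (1-β) • g t)
    (hx : ∀ t j, x (t+1) j = x t j - η * Real.sign (m (t+1) j))
    (herr : ∀ t, ‖m (t+1) - τ • gradient f (x t)‖ ≤ ε t) :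
    (1/(T:ℝ)) * ∑ t ∈ Finset.range T, ∑ j, |gradient f (x t) j|
      ≤ (f (x 0) - fstar) / (η * T)
        + (2 * Real.sqrt d / (τ * T)) * ∑ t ∈ Finset.range T, ε t
        + η * d * L / 2 := by
  have hTpos : (0:ℝ) < T := by exact_mod_cast hT
  set S : ℕ → ℝ := fun t => ∑ j, |gradient f (x t) j| with hS
  have step : ∀ t, η * S t ≤ f (x t) - f (x (t+1))
      + η * (2 * Real.sqrt d / τ) * ε t + η^2 * d * L / 2 := by
    intro t
    set G := gradient f (x t) with hG
    set M := m (t+1) with hM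
    have hδ : ∀ j, (x (t+1) - x t) j = -(η * Real.sign (M j)) := by
      intro j
      have := hx t j
      simp only [PiLp.sub_apply]
      rw [this]; ring
    have hinner : (inner ℝ G (x (t+1) - x t) : ℝ)
        = -(η * ∑ j, G j * Real.sign (M j)) := by
      calc (inner ℝ G (x (t+1) - x t) : ℝ) = ∑ j, G j * ((x (t+1) - x t) j) := by
            simp [PiLp.inner_apply, RCLike.inner_apply, conj_trivial, mul_comm]
        _ = ∑ j, G j * (-(η * Real.sign (M j))) :=
            Finset.sum_congr rfl fun j _ => by rw [hδ j]
        _ = -(η * ∑ j, G j * Real.sign (M j)) := by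
            rw [Finset.mul_sum, ← Finset.sum_neg_distrib]
            exact Finset.sum_congr rfl fun j _ => by ring
    have hnormsq : ‖x (t+1) - x t‖^2 ≤ η^2 * d := by
      rw [EuclideanSpace.norm_eq, Real.sq_sqrt (Finset.sum_nonneg fun j _ => by positivity)]
      calc ∑ j, ‖(x (t+1) - x t) j‖^2 ≤ ∑ _j : Fin d, η^2 := by
            apply Finset.sum_le_sum
            intro j _
            rw [hδ j, Real.norm_eq_abs, abs_neg, sq_abs]
            rcases Real.sign_apply_eq (M j) with h | h | h <;> rw [h] <;> nlinarith
        _ = η^2 * d := by simp [mul_comm]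
    have hsign : ∑ j, |G j| - ∑ j, G j * Real.sign (M j)
        ≤ (2 * Real.sqrt d / τ) * ε t := by
      have h1 : ∀ j, |G j| - G j * Real.sign (M j) ≤ (2/τ) * |τ * G j - M j| := by
        intro j
        have h2 := sign_key τ (G j) (M j) hτ
        rw [div_mul_eq_mul_div, le_div_iff₀ hτ]
        nlinarith [h2]
      have hεnn : (0:ℝ) ≤ ε t := le_trans (norm_nonneg _) (herr t)
      calc ∑ j, |G j| - ∑ j, G j * Real.sign (M j)
          = ∑ j, (|G j| - G j * Real.sign (M j)) := by rw [Finset.sum_sub_distrib]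
        _ ≤ ∑ j, (2/τ) * |τ * G j - M j| := Finset.sum_le_sum fun j _ => h1 j
        _ = (2/τ) * ∑ j, |τ * G j - M j| := by rw [Finset.mul_sum]
        _ ≤ (2/τ) * (Real.sqrt d * ‖(τ • G - M : EuclideanSpace ℝ (Fin d))‖) := by
            apply mul_le_mul_of_nonneg_left _ (by positivity)
            have h3 := l1_le_sqrt_d (τ • G - M)
            have h4 : ∀ j, ((τ • G - M : EuclideanSpace ℝ (Fin d))) j = τ * G j - M j := by
              intro j; simp [PiLp.sub_apply, PiLp.smul_apply, smul_eq_mul]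
            calc ∑ j, |τ * G j - M j| = ∑ j, |(τ • G - M : EuclideanSpace ℝ (Fin d)) j| :=
                  Finset.sum_congr rfl fun j _ => by rw [h4 j]
              _ ≤ _ := h3
        _ ≤ (2/τ) * (Real.sqrt d * ε t) := by
            apply mul_le_mul_of_nonneg_left _ (by positivity)
            apply mul_le_mul_of_nonneg_left _ (Real.sqrt_nonneg _)
            rw [norm_sub_rev]
            exact herr t
        _ = (2 * Real.sqrt d / τ) * ε t := by ring
    have hdesc := descent hL f hf hlip (x t) (x (t+1))
    rw [hinner] at hdesc
    have h5 : L / 2 * ‖x (t+1) - x t‖ ^ 2 ≤ L / 2 * (η^2 * d) :=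
      mul_le_mul_of_nonneg_left hnormsq (by positivity)
    have h6 : η * (∑ j, |G j| - ∑ j, G j * Real.sign (M j))
        ≤ η * ((2 * Real.sqrt d / τ) * ε t) := mul_le_mul_of_nonneg_left hsign hη.le
    have hSt : S t = ∑ j, |G j| := rfl
    rw [hSt]
    nlinarith [h6, h5, hdesc]
  have hsum : ∑ t ∈ Finset.range T, (η * S t)
      ≤ (f (x 0) - f (x T)) + η * (2 * Real.sqrt d / τ) * (∑ t ∈ Finset.range T, ε t)
        + T * (η^2 * d * L / 2) := by
    calc ∑ t ∈ Finset.range T, (η * S t)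
        ≤ ∑ t ∈ Finset.range T, (f (x t) - f (x (t+1))
            + η * (2 * Real.sqrt d / τ) * ε t + η^2 * d * L / 2) :=
          Finset.sum_le_sum fun t _ => step t
      _ = (f (x 0) - f (x T)) + η * (2 * Real.sqrt d / τ) * (∑ t ∈ Finset.range T, ε t)
            + T * (η^2 * d * L / 2) := by
          rw [Finset.sum_add_distrib, Finset.sum_add_distrib,
            Finset.sum_range_sub' (fun t => f (x t)) T, ← Finset.mul_sum,
            Finset.sum_const, Finset.card_range, nsmul_eq_mul]
  have key : η * ∑ t ∈ Finset.range T, S t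
      ≤ (f (x 0) - fstar) + η * (2 * Real.sqrt d / τ) * (∑ t ∈ Finset.range T, ε t)
        + T * (η^2 * d * L / 2) := by
    rw [Finset.mul_sum]
    have := hlb (x T)
    linarith [hsum]
  have hηT : (0:ℝ) < η * T := mul_pos hη hTpos
  calc (1/(T:ℝ)) * ∑ t ∈ Finset.range T, S t
      = (η * ∑ t ∈ Finset.range T, S t) / (η * T) := by
        field_simp
    _ ≤ ((f (x 0) - fstar) + η * (2 * Real.sqrt d / τ) * (∑ t ∈ Finset.range T, ε t)
          + T * (η^2 * d * L / 2)) / (η * T) := by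
        exact (div_le_div_iff_of_pos_right hηT).2 key
    _ = (f (x 0) - fstar) / (η * T)
          + (2 * Real.sqrt d / (τ * T)) * ∑ t ∈ Finset.range T, ε t
          + η * d * L / 2 := by
        field_simp
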